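/- Let G be a group and H ≤ G a self-normalized subgroup, i.e. N_G(H) = H. Then H is an Aut-splitting subgroup of G if and only if the following three conditions hold: (1) the center Z(G) (which is contained in Z(H) since N_G(H) = H) has finite index in the center Z(H); (2) there exists a finite-index subgroup A ≤ Aut(G) such that every α ∈ A maps H onto a conjugate of H; (3) the image of the composite homomorphism Aut_H(G) → Aut(H) → Out(H), sending α ∈ Aut_H(G) to the class in Out(H) of its restriction to H, is finite. -/

import Mathlib

section Defs

variable (G : Type*) [Group G]

/-- The subgroup of inner automorphisms of `G`. -/
def Inn : Subgroup (MulAut G) := (MulAut.conj : G →* MulAut G).range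

instance Inn.normal : (Inn G).Normal := by
  constructor
  intro n hn φ
  obtain ⟨g, rfl⟩ := hn
  refine ⟨φ g, ?_⟩
  ext x
  simp only [MulAut.conj_apply, MulAut.mul_apply, map_mul, map_inv, MulAut.inv_def,
    MulEquiv.apply_symm_apply]

/-- The outer automorphism group `Out(G) = Aut(G)/Inn(G)`. -/
def Out := MulAut G ⧸ Inn G

instance : Group (Out G) := inferInstanceAs (Group (MulAut G ⧸ Inn G))

/-- The canonical projection `Aut(G) → Out(G)`. -/
def outProj : MulAut G →* Out G := QuotientGroup.mk' (Inn G)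

/-- A surjective homomorphism `f : A → B` splits virtually if it admits a section on some
finite-index subgroup of `B`. -/
def SplitsVirtually {A B : Type*} [Group A] [Group B] (f : A →* B) : Prop :=
  ∃ B' : Subgroup B, B'.FiniteIndex ∧ ∃ s : (↥B') →* A, ∀ x : B', f (s x) = (x : B)

/-- A group is residually finite if every nontrivial element survives in some finite quotient. -/
def ResiduallyFinite (G : Type*) [Group G] : Prop :=
  ∀ g : G, g ≠ 1 → ∃ (F : Type) (_ : Group F) (_ : Finite F) (φ : G →* F), φ g ≠ 1

/-- A group is residually `p` if every nontrivial element survives in some finite `p`-group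
quotient. -/
def ResiduallyP (p : ℕ) (G : Type*) [Group G] : Prop :=
  ∀ g : G, g ≠ 1 →
    ∃ (F : Type) (_ : Group F) (_ : Finite F) (φ : G →* F), IsPGroup p F ∧ φ g ≠ 1

/-- A group is virtually residually `p` if some finite-index subgroup is residually `p`. -/
def VirtuallyResiduallyP (p : ℕ) (G : Type*) [Group G] : Prop :=
  ∃ K : Subgroup G, K.FiniteIndex ∧ ResiduallyP p ↥K

/-- `Aut_{H̲}(G)`: the subgroup of automorphisms of `G` fixing `H` pointwise. -/
def autFix (H : Subgroup G) : Subgroup (MulAut G) where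
  carrier := {φ | ∀ h ∈ H, φ h = h}
  one_mem' := fun _ _ => rfl
  mul_mem' := by
    intro a b ha hb h hh
    show a (b h) = h
    rw [hb h hh, ha h hh]
  inv_mem' := by
    intro a ha h hh
    show a⁻¹ h = h
    calc a⁻¹ h = a⁻¹ (a h) := by rw [ha h hh]
    _ = h := by rw [MulAut.inv_def]; exact a.symm_apply_apply h

/-- `Aut_H(G)`: the subgroup of automorphisms of `G` mapping `H` onto itself. -/
def autSetwise (H : Subgroup G) : Subgroup (MulAut G) where
  carrier := {φ | ∀ g : G, φ g ∈ H ↔ g ∈ H}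
  one_mem' := fun _ => Iff.rfl
  mul_mem' := by
    intro a b ha hb g
    show a (b g) ∈ H ↔ g ∈ H
    rw [ha, hb]
  inv_mem' := by
    intro a ha g
    show a⁻¹ g ∈ H ↔ g ∈ H
    have h1 : a (a⁻¹ g) = g := by rw [MulAut.inv_def]; exact a.apply_symm_apply g
    have := ha (a⁻¹ g)
    rw [h1] at this
    exact this.symm

theorem mem_autSetwise {H : Subgroup G} {φ : MulAut G} :
    φ ∈ autSetwise G H ↔ ∀ g : G, φ g ∈ H ↔ g ∈ H := Iff.rfl

/-- `H` is an Aut-splitting subgroup of `G` if the restriction of `Aut(G) → Out(G)` to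
`Aut_{H̲}(G)` has finite kernel and an image of finite index in `Out(G)`. -/
def IsAutSplitting (H : Subgroup G) : Prop :=
  Finite ((outProj G).comp (autFix G H).subtype).ker ∧
    ((autFix G H).map (outProj G)).FiniteIndex

/-- The conjugate `gKg⁻¹` of a subgroup. -/
def conjSubgroup (g : G) (K : Subgroup G) : Subgroup G :=
  K.map (MulAut.conj g).toMonoidHom

end Defs

section Restrict
variable (G : Type*) [Group G]

/-- Restriction of an automorphism preserving `H` to an automorphism of `H`. -/
def restrictEquiv (H : Subgroup G) (α : MulAut G) (hα : ∀ g : G, α g ∈ H ↔ g ∈ H) :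
    MulAut ↥H where
  toFun h := ⟨α (h : G), (hα (h : G)).2 h.2⟩
  invFun h := ⟨(α⁻¹ : MulAut G) (h : G), by
    have h1 : α ((α⁻¹ : MulAut G) h.1) = h.1 := by
      rw [MulAut.inv_def]; exact α.apply_symm_apply _
    exact (hα _).1 (h1.symm ▸ h.2)⟩
  left_inv h := by
    ext
    show (α⁻¹ : MulAut G) (α (h : G)) = (h : G)
    rw [MulAut.inv_def]; exact α.symm_apply_apply _
  right_inv h := by
    ext
    show α ((α⁻¹ : MulAut G) (h : G)) = (h : G)
    rw [MulAut.inv_def]; exact α.apply_symm_apply _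
  map_mul' h₁ h₂ := by ext; exact map_mul α (h₁ : G) (h₂ : G)

/-- The restriction homomorphism `Aut_H(G) → Aut(H)`, sending an automorphism of `G`
preserving `H` setwise to its restriction to `H`. -/
def autRestrictHom (H : Subgroup G) : ↥(autSetwise G H) →* MulAut ↥H where
  toFun α := restrictEquiv G H α.1 α.2
  map_one' := by ext x; rfl
  map_mul' a b := by ext x; rfl

end Restrict

section Helpers

variable {G : Type*} [Group G] {H : Subgroup G}

lemma mem_autFix {φ : MulAut G} : φ ∈ autFix G H ↔ ∀ h ∈ H, φ h = h := Iff.rfl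

lemma outProj_eq_one_iff {α : MulAut G} : outProj G α = 1 ↔ α ∈ Inn G :=
  QuotientGroup.eq_one_iff α

lemma outProj_conj (g : G) : outProj G (MulAut.conj g) = 1 :=
  outProj_eq_one_iff.mpr ⟨g, rfl⟩

lemma outProj_surjective : Function.Surjective (outProj G) :=
  QuotientGroup.mk'_surjective _

lemma outProj_eq_iff {α β : MulAut G} :
    outProj G β = outProj G α ↔ ∃ z ∈ Inn G, β * z = α := by
  unfold outProj
  exact QuotientGroup.mk'_eq_mk' (N := Inn G)

lemma autFix_le_autSetwise : autFix G H ≤ autSetwise G H := by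
  intro β hβ
  rw [mem_autSetwise]
  intro g
  constructor
  · intro hg
    have h1 := (inv_mem hβ : β⁻¹ ∈ autFix G H) (β g) hg
    have h2 : (β⁻¹ : MulAut G) (β g) = g := by
      rw [MulAut.inv_def]; exact β.symm_apply_apply g
    rw [h2] at h1
    rw [h1]; exact hg
  · intro hg; rw [hβ g hg]; exact hg

lemma conj_comp_apply (β : MulAut G) (g u : G) :
    (β * MulAut.conj g) u = β g * β u * (β g)⁻¹ := by
  rw [MulAut.mul_apply, MulAut.conj_apply, map_mul, map_mul, map_inv]

lemma keyElt_mem {β : MulAut G} (hβ : β ∈ autFix G H) {g : G}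
    (hα : β * MulAut.conj g ∈ autSetwise G H) : β g ∈ Subgroup.normalizer (H : Set G) := by
  have hβS := autFix_le_autSetwise hβ
  rw [Subgroup.mem_normalizer_iff]
  intro x
  set u := (β⁻¹ : MulAut G) x with hu
  have hβu : β u = x := by rw [hu, MulAut.inv_def]; exact β.apply_symm_apply x
  have h1 : β g * x * (β g)⁻¹ = (β * MulAut.conj g) u := by
    rw [conj_comp_apply, hβu]
  rw [h1]
  rw [mem_autSetwise] at hα hβS
  refine Iff.trans ?_ (hα u).symm
  rw [← hβu]
  exact hβS u

/-- Lemma A: if an element of `autSetwise` is `autFix` modulo `Inn`, its class in `Out H`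
is trivial. -/
lemma chi_eq_one_of (hself : Subgroup.normalizer (H : Set G) = H) {β : MulAut G} (hβ : β ∈ autFix G H) (g : G)
    (hα : β * MulAut.conj g ∈ autSetwise G H) :
    ((outProj ↥H).comp (autRestrictHom G H)) ⟨β * MulAut.conj g, hα⟩ = 1 := by
  set h : ↥H := ⟨β g, hself ▸ keyElt_mem hβ hα⟩ with hh
  have hres : autRestrictHom G H ⟨β * MulAut.conj g, hα⟩ = MulAut.conj h := by
    apply MulEquiv.ext
    intro x
    apply Subtype.ext
    show (β * MulAut.conj g) (x : G) = ((MulAut.conj h x : ↥H) : G)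
    rw [conj_comp_apply, hβ (x : G) x.2, MulAut.conj_apply]
    rfl
  rw [MonoidHom.comp_apply, hres]
  exact outProj_conj h

/-- Lemma B: if an element of `autSetwise` restricts to an inner automorphism of `H`, it agrees
with an element of `autFix` modulo `Inn`. -/
lemma exists_out_eq (a : ↥(autSetwise G H))
    (hχ : ((outProj ↥H).comp (autRestrictHom G H)) a = 1) :
    ∃ β ∈ autFix G H, outProj G β = outProj G (a : MulAut G) := by
  have h1 : autRestrictHom G H a ∈ Inn ↥H := outProj_eq_one_iff.mp hχ
  obtain ⟨h, hh⟩ := h1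
  refine ⟨(MulAut.conj ((h : ↥H) : G))⁻¹ * (a : MulAut G), ?_, ?_⟩
  · intro x hx
    have happ : (a : MulAut G) x = ((h : ↥H) : G) * x * ((h : ↥H) : G)⁻¹ := by
      have h2 := congrArg (fun φ : MulAut ↥H => ((φ ⟨x, hx⟩ : ↥H) : G)) hh
      simp only [MulAut.conj_apply] at h2
      exact h2.symm.trans rfl
    show ((MulAut.conj ((h : ↥H) : G))⁻¹ * (a : MulAut G)) x = x
    rw [MulAut.mul_apply, happ, MulAut.inv_def, MulAut.conj_symm_apply]
    group
  · rw [map_mul, map_inv, outProj_conj]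
    simp

lemma mem_autSetwise_of_map_eq {α : MulAut G} (h : H.map α.toMonoidHom = H) :
    α ∈ autSetwise G H := by
  rw [mem_autSetwise]
  intro g
  constructor
  · intro hg
    rw [← h] at hg
    obtain ⟨x, hx, hxe⟩ := hg
    rw [← α.injective hxe]
    exact hx
  · intro hg
    rw [← h]
    exact ⟨g, hg, rfl⟩

lemma mem_conjSubgroup {g y : G} :
    y ∈ conjSubgroup G g H ↔ ∃ x ∈ H, g * x * g⁻¹ = y := Iff.rfl

/-- The kernel of `Aut_{H̲}(G) → Out(G)` is finite iff `Z(G) ∩ Z(H)` has finite index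
in `Z(H)`. -/
lemma ker_finite_iff (hself : Subgroup.normalizer (H : Set G) = H) :
    Finite ((outProj G).comp (autFix G H).subtype).ker ↔
      ((Subgroup.center G).subgroupOf H).relIndex (Subgroup.center ↥H) ≠ 0 := by
  set K := ((outProj G).comp (autFix G H).subtype).ker with hK
  -- the conjugation homomorphism from the center of `H` to `autFix`
  have hfix : ∀ z : ↥(Subgroup.center ↥H), MulAut.conj ((z : ↥H) : G) ∈ autFix G H := by
    intro z x hx
    rw [MulAut.conj_apply]
    have hc := Subgroup.mem_center_iff.mp z.2 ⟨x, hx⟩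
    have hc' : x * ((z : ↥H) : G) = ((z : ↥H) : G) * x := congrArg Subtype.val hc
    rw [← hc', mul_assoc, mul_inv_cancel, mul_one]
  set φfix : ↥(Subgroup.center ↥H) →* ↥(autFix G H) :=
    { toFun := fun z => ⟨MulAut.conj ((z : ↥H) : G), hfix z⟩
      map_one' := by apply Subtype.ext; simp
      map_mul' := by intro a b; apply Subtype.ext; simp } with hφfix
  have hmem : ∀ z, φfix z ∈ K := by
    intro z
    show ((outProj G).comp (autFix G H).subtype) (φfix z) = 1
    exact outProj_conj _
  set ψ : ↥(Subgroup.center ↥H) →* ↥K := φfix.codRestrict K hmem with hψ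
  have hsurj : Function.Surjective ψ := by
    rintro ⟨⟨α, hαfix⟩, hk⟩
    have hα1 : outProj G α = 1 := hk
    obtain ⟨g, hg⟩ := outProj_eq_one_iff.mp hα1
    have hgH : ∀ x ∈ H, g * x * g⁻¹ = x := by
      intro x hx
      rw [← MulAut.conj_apply, hg]
      exact hαfix x hx
    have hgN : g ∈ Subgroup.normalizer (H : Set G) := by
      rw [Subgroup.mem_normalizer_iff]
      intro x
      constructor
      · intro hx
        rw [hgH x hx]; exact hx
      · intro hx
        have h2 := hgH _ hx
        have h4 : g * x * g⁻¹ = x := mul_left_cancel (mul_right_cancel h2)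
        rw [← h4]; exact hx
    have hgmem : g ∈ H := hself ▸ hgN
    have hgZ : (⟨g, hgmem⟩ : ↥H) ∈ Subgroup.center ↥H := by
      rw [Subgroup.mem_center_iff]
      intro b
      apply Subtype.ext
      show (b : G) * g = g * (b : G)
      have := hgH (b : G) b.2
      calc (b : G) * g = g * ((b : G)) * g⁻¹ * g := by rw [this]
        _ = g * (b : G) := by group
    refine ⟨⟨⟨g, hgmem⟩, hgZ⟩, ?_⟩
    apply Subtype.ext
    apply Subtype.ext
    exact hg
  have hker : ψ.ker = (((Subgroup.center G).subgroupOf H).subgroupOf (Subgroup.center ↥H)) := by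
    ext z
    constructor
    · intro hz
      have hz1 : MulAut.conj ((z : ↥H) : G) = 1 := by
        have := congrArg (fun x : ↥K => ((x : ↥(autFix G H)) : MulAut G)) hz
        exact this
      rw [Subgroup.mem_subgroupOf, Subgroup.mem_subgroupOf, Subgroup.mem_center_iff]
      intro x
      have := congrArg (fun e : MulAut G => e x) hz1
      simp only [MulAut.conj_apply, MulAut.one_apply] at this
      calc x * ((z : ↥H) : G) = (((z : ↥H) : G) * x * ((z : ↥H) : G)⁻¹) * ((z : ↥H) : G) := by
            rw [this]
        _ = ((z : ↥H) : G) * x := by group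
    · intro hz
      rw [Subgroup.mem_subgroupOf, Subgroup.mem_subgroupOf] at hz
      apply Subtype.ext
      apply Subtype.ext
      show MulAut.conj ((z : ↥H) : G) = 1
      apply MulEquiv.ext
      intro x
      rw [MulAut.conj_apply, MulAut.one_apply]
      have hcz := Subgroup.mem_center_iff.mp hz x
      rw [← hcz, mul_assoc, mul_inv_cancel, mul_one]
  have heq : Subgroup.relIndex ((Subgroup.center G).subgroupOf H) (Subgroup.center ↥H)
      = ψ.ker.index := by rw [hker]; rfl
  rw [heq, Subgroup.index_eq_card, Nat.card_ne_zero]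
  constructor
  · intro hfin
    have : Finite (↥(Subgroup.center ↥H) ⧸ ψ.ker) :=
      Finite.of_equiv _ (QuotientGroup.quotientKerEquivOfSurjective ψ hsurj).symm.toEquiv
    exact ⟨inferInstance, this⟩
  · rintro ⟨-, hfin⟩
    exact Finite.of_equiv _ (QuotientGroup.quotientKerEquivOfSurjective ψ hsurj).toEquiv

end Helpers


/-- For a self-normalized subgroup `H` of `G`: `H` is Aut-splitting iff
(1) `Z(G)` has finite index in `Z(H)`, (2) a finite-index subgroup of `Aut(G)` maps `H` onto
conjugates of `H`, and (3) the image of the composite `Aut_H(G) → Aut(H) → Out(H)` is finite. -/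
theorem statement12 (G : Type*) [Group G] (H : Subgroup G) (hself : Subgroup.normalizer (H : Set G) = H) :
    IsAutSplitting G H ↔
      (((Subgroup.center G).subgroupOf H).relIndex (Subgroup.center ↥H) ≠ 0 ∧
      (∃ A : Subgroup (MulAut G), A.FiniteIndex ∧
        ∀ α ∈ A, ∃ g : G, H.map (MulEquiv.toMonoidHom α) = conjSubgroup G g H) ∧
      Finite (((outProj ↥H).comp (autRestrictHom G H)).range)) := by
  unfold IsAutSplitting
  constructor
  · rintro ⟨hker, hU⟩
    have hAfin : (((autFix G H).map (outProj G)).comap (outProj G)).FiniteIndex :=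
      ⟨by
        rw [((autFix G H).map (outProj G)).index_comap_of_surjective (outProj_surjective (G := G))]
        exact hU.index_ne_zero⟩
    refine ⟨(ker_finite_iff hself).mp hker, ?_, ?_⟩
    · -- condition (2)
      refine ⟨((autFix G H).map (outProj G)).comap (outProj G), hAfin, ?_⟩
      intro α hα
      rw [Subgroup.mem_comap] at hα
      obtain ⟨β, hβF, hout⟩ := Subgroup.mem_map.mp hα
      obtain ⟨z, hz, hzα⟩ := outProj_eq_iff.mp hout
      obtain ⟨g, rfl⟩ := hz
      refine ⟨β g, ?_⟩
      have hval : ∀ x ∈ H, α x = β g * x * (β g)⁻¹ := by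
        intro x hx
        rw [← hzα, conj_comp_apply, hβF x hx]
      ext y
      rw [Subgroup.mem_map, mem_conjSubgroup]
      constructor
      · rintro ⟨x, hx, rfl⟩
        exact ⟨x, hx, (hval x hx).symm⟩
      · rintro ⟨x, hx, rfl⟩
        exact ⟨x, hx, hval x hx⟩
    · -- condition (3)
      haveI := hAfin
      have hS'fin : ((((autFix G H).map (outProj G)).comap (outProj G)).comap
          (autSetwise G H).subtype).FiniteIndex :=
        ⟨by
          rw [Subgroup.index_comap]
          exact (Subgroup.instFiniteIndex_subgroupOf _ _).index_ne_zero⟩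
      have hle : (((autFix G H).map (outProj G)).comap (outProj G)).comap
          (autSetwise G H).subtype ≤ ((outProj ↥H).comp (autRestrictHom G H)).ker := by
        rintro ⟨α, hαS⟩ ha
        rw [Subgroup.mem_comap, Subgroup.mem_comap] at ha
        obtain ⟨β, hβF, hout⟩ := Subgroup.mem_map.mp ha
        obtain ⟨z, hz, hzα⟩ := outProj_eq_iff.mp hout
        obtain ⟨g, rfl⟩ := hz
        subst hzα
        rw [MonoidHom.mem_ker]
        exact chi_eq_one_of hself hβF g hαS
      haveI := hS'fin
      haveI : (((outProj ↥H).comp (autRestrictHom G H)).ker).FiniteIndex :=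
        Subgroup.finiteIndex_of_le hle
      exact Finite.of_equiv _
        (QuotientGroup.quotientKerEquivRange ((outProj ↥H).comp (autRestrictHom G H))).toEquiv
  · rintro ⟨h1, ⟨A, hA, hconj⟩, h3⟩
    haveI := h3
    refine ⟨(ker_finite_iff hself).mpr h1, ?_⟩
    -- V := image of autSetwise in Out G has finite index
    have hmapA : A.map (outProj G) ≤ (autSetwise G H).map (outProj G) := by
      rintro - ⟨α, hαA, rfl⟩
      obtain ⟨g, hg⟩ := hconj α hαA
      have hval : ∀ x : G, α x ∈ conjSubgroup G g H ↔ x ∈ H := by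
        intro x
        rw [← hg]
        constructor
        · rintro ⟨k, hk, he⟩
          have hkx : k = x := α.injective he
          rw [← hkx]; exact hk
        · intro hx; exact ⟨x, hx, rfl⟩
      have hα'S : (MulAut.conj g)⁻¹ * α ∈ autSetwise G H := by
        rw [mem_autSetwise]
        intro x
        have h5 : ((MulAut.conj g)⁻¹ * α) x = g⁻¹ * α x * g := by
          rw [MulAut.mul_apply, MulAut.inv_def, MulAut.conj_symm_apply]
        rw [h5, ← hval x]
        constructor
        · intro h6
          exact mem_conjSubgroup.mpr ⟨g⁻¹ * α x * g, h6, by group⟩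
        · intro h6
          obtain ⟨k, hk, he⟩ := mem_conjSubgroup.mp h6
          have hkk : g⁻¹ * α x * g = k := by rw [← he]; group
          rw [hkk]; exact hk
      have houteq : outProj G α = outProj G ((MulAut.conj g)⁻¹ * α) := by
        rw [map_mul, map_inv, outProj_conj]; simp
      rw [houteq]
      exact ⟨_, hα'S, rfl⟩
    haveI hAm : (A.map (outProj G)).FiniteIndex :=
      ⟨ne_zero_of_dvd_ne_zero hA.index_ne_zero
        (A.index_map_dvd (outProj_surjective (G := G)))⟩
    have hVfin : ((autSetwise G H).map (outProj G)).FiniteIndex :=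
      Subgroup.finiteIndex_of_le hmapA
    -- W := image of the kernel of χ in Out G
    have hWle : ((((outProj ↥H).comp (autRestrictHom G H)).ker.map
        (autSetwise G H).subtype).map (outProj G)) ≤ (autSetwise G H).map (outProj G) := by
      rintro - ⟨x, ⟨a, _, rfl⟩, rfl⟩
      exact ⟨(a : MulAut G), a.2, rfl⟩
    have hfinq : Finite (↥(autSetwise G H) ⧸ ((outProj ↥H).comp (autRestrictHom G H)).ker) :=
      Finite.of_equiv _
        (QuotientGroup.quotientKerEquivRange ((outProj ↥H).comp (autRestrictHom G H))).symm.toEquiv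
    have hmapfun : ∀ a : ↥(autSetwise G H),
        outProj G (a : MulAut G) ∈ (autSetwise G H).map (outProj G) := fun a => ⟨a, a.2, rfl⟩
    have hrel : Finite (↥((autSetwise G H).map (outProj G)) ⧸
        (((((outProj ↥H).comp (autRestrictHom G H)).ker.map (autSetwise G H).subtype).map
          (outProj G)).subgroupOf ((autSetwise G H).map (outProj G)))) := by
      set χ := (outProj ↥H).comp (autRestrictHom G H)
      set V := (autSetwise G H).map (outProj G)
      set W' := ((χ.ker.map (autSetwise G H).subtype).map (outProj G)).subgroupOf V
      let f : ↥(autSetwise G H) → ↥V ⧸ W' :=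
        fun a => QuotientGroup.mk ⟨outProj G (a : MulAut G), hmapfun a⟩
      have hresp : ∀ a b : ↥(autSetwise G H),
          (QuotientGroup.leftRel χ.ker) a b → f a = f b := by
        intro a b hab
        have hab' : a⁻¹ * b ∈ χ.ker := QuotientGroup.leftRel_apply.mp hab
        apply (QuotientGroup.eq (s := W')).mpr
        rw [Subgroup.mem_subgroupOf]
        show (outProj G (a : MulAut G))⁻¹ * outProj G (b : MulAut G) ∈ _
        have : (outProj G (a : MulAut G))⁻¹ * outProj G (b : MulAut G)
            = outProj G (((a⁻¹ * b : ↥(autSetwise G H)) : MulAut G)) := by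
          rw [Subgroup.coe_mul, map_mul]
          simp
        rw [this]
        exact ⟨_, ⟨a⁻¹ * b, hab', rfl⟩, rfl⟩
      let f1 : (↥(autSetwise G H) ⧸ χ.ker) → (↥V ⧸ W') := Quotient.lift f hresp
      have hf1 : Function.Surjective f1 := by
        rintro ⟨⟨v, hv⟩⟩
        obtain ⟨α, hαS, rfl⟩ := hv
        exact ⟨QuotientGroup.mk ⟨α, hαS⟩, rfl⟩
      exact Finite.of_surjective f1 hf1
    have hrelne : ((((outProj ↥H).comp (autRestrictHom G H)).ker.map
        (autSetwise G H).subtype).map (outProj G)).relIndex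
          ((autSetwise G H).map (outProj G)) ≠ 0 := by
      rw [Subgroup.relIndex, Subgroup.index_eq_card]
      exact Nat.card_ne_zero.mpr ⟨⟨QuotientGroup.mk 1⟩, hrel⟩
    have hWfinne : ((((outProj ↥H).comp (autRestrictHom G H)).ker.map
        (autSetwise G H).subtype).map (outProj G)).index ≠ 0 := by
      rw [← Subgroup.relIndex_mul_index hWle]
      exact mul_ne_zero hrelne hVfin.index_ne_zero
    have hWU : ((((outProj ↥H).comp (autRestrictHom G H)).ker.map
        (autSetwise G H).subtype).map (outProj G)) ≤ (autFix G H).map (outProj G) := by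
      rintro - ⟨x, ⟨a, ha, rfl⟩, rfl⟩
      obtain ⟨β, hβF, hout⟩ := exists_out_eq a ha
      exact ⟨β, hβF, hout⟩
    haveI : ((((outProj ↥H).comp (autRestrictHom G H)).ker.map
        (autSetwise G H).subtype).map (outProj G)).FiniteIndex := ⟨hWfinne⟩
    exact Subgroup.finiteIndex_of_le hWU
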